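/- For a positive definite Hermitian matrix E ∈ ℂ^{n×n}, the function Λ ↦ tr(Λ E) - log det(Λ) over positive definite Hermitian Λ is uniquely minimized at Λ = E^{-1}, with minimum value n + log det(E). -/

import Mathlib

open Matrix ComplexOrder Finset
open scoped MatrixOrder

private lemma conj_posDef {n : ℕ} {Λ S : Matrix (Fin n) (Fin n) ℂ} (hΛ : Λ.PosDef)
    (hSH : S.IsHermitian) (hS : S.det ≠ 0) : (S * Λ * S).PosDef := by
  refine posDef_iff_dotProduct_mulVec.mpr ⟨?_, ?_⟩
  · show (S * Λ * S)ᴴ = _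
    rw [conjTranspose_mul, conjTranspose_mul, hSH.eq, hΛ.1.eq, mul_assoc]
  · intro x hx
    have hinj : Function.Injective S.mulVec :=
      Matrix.mulVec_injective_iff_isUnit.mpr ((Matrix.isUnit_iff_isUnit_det S).mpr hS.isUnit)
    have hx' : S *ᵥ x ≠ 0 := fun h => hx (hinj (by simpa using h))
    have := hΛ.dotProduct_mulVec_pos hx'
    rwa [star_mulVec, hSH.eq, ← Matrix.dotProduct_mulVec, mulVec_mulVec, mulVec_mulVec] at this

private lemma key {n : ℕ} (M : Matrix (Fin n) (Fin n) ℂ) (hM : M.PosDef) :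
    (n : ℝ) ≤ M.trace.re - Real.log M.det.re ∧
    (M.trace.re - Real.log M.det.re = (n : ℝ) → M = 1) := by
  have hμ := hM.eigenvalues_pos
  set μ := hM.1.eigenvalues with hμdef
  have htr : M.trace.re = ∑ i, μ i := by
    conv_lhs => rw [hM.1.spectral_theorem, Unitary.conjStarAlgAut_apply]
    rw [trace_mul_cycle, (Matrix.mem_unitaryGroup_iff').mp
      (hM.1.eigenvectorUnitary).2, one_mul, trace_diagonal]
    simp
    rfl
  have hdet : M.det.re = ∏ i, μ i := by
    rw [hM.1.det_eq_prod_eigenvalues]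
    norm_cast
  have hlog : Real.log M.det.re = ∑ i, Real.log (μ i) := by
    rw [hdet, Real.log_prod]
    exact fun i _ => (hμ i).ne'
  have hobj : M.trace.re - Real.log M.det.re = ∑ i, (μ i - Real.log (μ i)) := by
    rw [htr, hlog, Finset.sum_sub_distrib]
  have hterm : ∀ i : Fin n, (1 : ℝ) ≤ μ i - Real.log (μ i) := fun i => by
    have := Real.log_le_sub_one_of_pos (hμ i)
    linarith
  constructor
  · rw [hobj]
    calc (n : ℝ) = ∑ _i : Fin n, (1 : ℝ) := by simp
    _ ≤ _ := Finset.sum_le_sum fun i _ => hterm i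
  · intro heq
    have hall : ∀ i, μ i = 1 := by
      by_contra hc
      push_neg at hc
      obtain ⟨j, hj⟩ := hc
      have hstrict : (1 : ℝ) < μ j - Real.log (μ j) := by
        have := Real.log_lt_sub_one_of_pos (hμ j) hj
        linarith
      have : ∑ _i : Fin n, (1 : ℝ) < ∑ i, (μ i - Real.log (μ i)) :=
        Finset.sum_lt_sum (fun i _ => hterm i) ⟨j, Finset.mem_univ j, hstrict⟩
      simp only [Finset.sum_const, Finset.card_univ, Fintype.card_fin, nsmul_eq_mul,
        mul_one] at this
      rw [hobj] at heq
      linarith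
    have hdiag : Matrix.diagonal ((RCLike.ofReal : ℝ → ℂ) ∘ μ) = 1 := by
      rw [show ((RCLike.ofReal : ℝ → ℂ) ∘ μ) = fun _ => 1 from funext fun i => by
        simp [hall i]]
      exact Matrix.diagonal_one
    rw [hM.1.spectral_theorem, Unitary.conjStarAlgAut_apply, hdiag, mul_one,
      (Matrix.mem_unitaryGroup_iff).mp (hM.1.eigenvectorUnitary).2]

/-- For Hermitian positive definite `E`, the function `Λ ↦ tr(Λ E) - log det Λ` over
Hermitian positive definite `Λ` is uniquely minimized at `Λ = E⁻¹`, with minimum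
value `n + log det E`. -/
theorem wmmse_optimal_weight (n : ℕ) (E : Matrix (Fin n) (Fin n) ℂ) (hE : E.PosDef) :
    (∀ Λ : Matrix (Fin n) (Fin n) ℂ, Λ.PosDef →
      (Matrix.trace (E⁻¹ * E)).re - Real.log ((E⁻¹).det.re)
        ≤ (Matrix.trace (Λ * E)).re - Real.log (Λ.det.re)) ∧
    (∀ Λ : Matrix (Fin n) (Fin n) ℂ, Λ.PosDef →
      (Matrix.trace (Λ * E)).re - Real.log (Λ.det.re)
        = (Matrix.trace (E⁻¹ * E)).re - Real.log ((E⁻¹).det.re) → Λ = E⁻¹) ∧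
    (Matrix.trace (E⁻¹ * E)).re - Real.log ((E⁻¹).det.re)
      = n + Real.log (E.det.re) := by
  have hdetE : E.det ≠ 0 := hE.det_pos.ne'
  have hdetEre : 0 < E.det.re := (Complex.pos_iff.mp hE.det_pos).1
  have hdetEim : E.det.im = 0 := (Complex.pos_iff.mp hE.det_pos).2.symm
  -- third claim
  have h3 : (Matrix.trace (E⁻¹ * E)).re - Real.log ((E⁻¹).det.re)
      = n + Real.log (E.det.re) := by
    rw [Matrix.nonsing_inv_mul E hdetE.isUnit, Matrix.trace_one, Matrix.det_nonsing_inv,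
      Ring.inverse_eq_inv]
    have : (E.det⁻¹).re = (E.det.re)⁻¹ := by
      rw [show E.det = (E.det.re : ℂ) from Complex.ext rfl (by simp [hdetEim])]
      norm_cast
    rw [this, Real.log_inv]
    simp
  -- square root
  set S := CFC.sqrt E with hSdef
  have hSS : S * S = E := CFC.sqrt_mul_sqrt_self E (nonneg_iff_posSemidef.mpr hE.posSemidef)
  have hSH : S.IsHermitian := (CFC.sqrt_nonneg E).posSemidef.1
  have hdetS : S.det ≠ 0 := by
    intro h
    apply hdetE
    rw [← hSS, Matrix.det_mul, h, mul_zero]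
  -- main inequality setup
  have main : ∀ Λ : Matrix (Fin n) (Fin n) ℂ, Λ.PosDef →
      ((n : ℝ) + Real.log (E.det.re) ≤ (Matrix.trace (Λ * E)).re - Real.log (Λ.det.re) ∧
      ((Matrix.trace (Λ * E)).re - Real.log (Λ.det.re) = n + Real.log (E.det.re) → Λ = E⁻¹)) := by
    intro Λ hΛ
    have hdetΛre : 0 < Λ.det.re := (Complex.pos_iff.mp hΛ.det_pos).1
    have hdetΛim : Λ.det.im = 0 := (Complex.pos_iff.mp hΛ.det_pos).2.symm
    set M := S * Λ * S with hMdef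
    have hMpd : M.PosDef := conj_posDef hΛ hSH hdetS
    have htr : M.trace = Matrix.trace (Λ * E) := by
      rw [hMdef, trace_mul_cycle, hSS, trace_mul_comm]
    have hdet : M.det = Λ.det * E.det := by
      rw [hMdef, Matrix.det_mul, Matrix.det_mul, ← hSS, Matrix.det_mul]
      ring
    have hdetre : M.det.re = Λ.det.re * E.det.re := by
      rw [hdet, Complex.mul_re, hdetΛim, hdetEim]
      ring
    have hlogdet : Real.log M.det.re = Real.log Λ.det.re + Real.log E.det.re := by
      rw [hdetre, Real.log_mul hdetΛre.ne' hdetEre.ne']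
    obtain ⟨hineq, heqcase⟩ := key M hMpd
    constructor
    · rw [htr, hlogdet] at hineq
      linarith
    · intro heq
      have : M.trace.re - Real.log M.det.re = (n : ℝ) := by
        rw [htr, hlogdet]
        linarith
      have hM1 : M = 1 := heqcase this
      -- from S * Λ * S = 1 deduce Λ = E⁻¹
      have hSinv : IsUnit S := (Matrix.isUnit_iff_isUnit_det S).mpr hdetS.isUnit
      have := hSinv.invertible
      have hΛeq : Λ = S⁻¹ * S⁻¹ := by
        have hM1' : S * Λ * S = 1 := hM1
        have h1 : S⁻¹ * (S * Λ * S) * S⁻¹ = S⁻¹ * S⁻¹ := by rw [hM1']; simp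
        calc Λ = (S⁻¹ * S) * Λ * (S * S⁻¹) := by
              rw [Matrix.nonsing_inv_mul S hdetS.isUnit, Matrix.mul_nonsing_inv S hdetS.isUnit, one_mul, mul_one]
          _ = S⁻¹ * (S * Λ * S) * S⁻¹ := by noncomm_ring
          _ = S⁻¹ * S⁻¹ := h1
      rw [hΛeq, ← Matrix.mul_inv_rev, hSS]
  exact ⟨fun Λ hΛ => h3 ▸ (main Λ hΛ).1, fun Λ hΛ heq => (main Λ hΛ).2 (by rw [heq, h3]), h3⟩
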